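/- arXiv:1304.7063 — 3 statements merged into one kernel-verified Lean document; each statement's English description precedes it below -/
import Mathlib

section
/- Let R be a ring and L, L₁, L₂, M, N, M₁, N₁ ∈ R satisfy N·L = L₁·M and N₁·L₁ = L₂·M₁. Then (N₁·N)·L = L₂·(M₁·M). Moreover, if (M, N) is replaced by an equivalent pair (M + A·L, N + L₁·A) and (M₁, N₁) by (M₁ + B·L₁, N₁ + L₂·B), then the composed pair (M₁·M, N₁·N) changes by an equivalent pair: there exists C ∈ R with the new composed first component equal to M₁·M + C·L and the new composed second component equal to N₁·N + L₂·C. -/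
/- STATEMENT 1: composition of Darboux transformations is well-defined on
equivalence classes. -/
theorem stmt1 {R : Type*} [Ring R] (L L₁ L₂ M N M₁ N₁ : R)
    (h1 : N * L = L₁ * M) (h2 : N₁ * L₁ = L₂ * M₁) :
    (N₁ * N) * L = L₂ * (M₁ * M) ∧
    ∀ A B : R, ∃ C : R,
      (M₁ + B * L₁) * (M + A * L) = M₁ * M + C * L ∧
      (N₁ + L₂ * B) * (N + L₁ * A) = N₁ * N + L₂ * C := by
  constructor
  · calc (N₁ * N) * L = N₁ * (L₁ * M) := by rw [mul_assoc, h1]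
    _ = (L₂ * M₁) * M := by rw [← mul_assoc, h2]
    _ = L₂ * (M₁ * M) := by rw [mul_assoc]
  · intro A B
    refine ⟨M₁ * A + B * N + B * L₁ * A, ?_, ?_⟩
    · have e1 : B * L₁ * M = B * N * L := by rw [mul_assoc, ← h1, mul_assoc]
      simp only [mul_add, add_mul, ← mul_assoc, e1]
      abel
    · have e2 : N₁ * L₁ * A = L₂ * M₁ * A := by rw [h2]
      simp only [mul_add, add_mul, ← mul_assoc, e2]
      abel
end

section
/- Let K be a differential field with commuting derivations ∂x, ∂y, and let L = ∂x∂y + a∂x + b∂y + c with a, b, c ∈ K. Suppose M, N ∈ K[∂x,∂y] satisfy N·L = L₁·M where L₁ = ∂x∂y + a₁∂x + b₁∂y + c₁ for some a₁, b₁, c₁ ∈ K, and suppose M is a nonzero ordinary differential operator in ∂x only (M = Σᵢ mᵢ∂xⁱ with mᵢ ∈ K). Then N is also an ordinary differential operator in ∂x only: when N is written in the standard form Σ n_{ij} ∂xⁱ∂yʲ, all coefficients n_{ij} with j ≥ 1 vanish. -/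
/- STATEMENT 9: if M is a nonzero ordinary differential operator in ∂x and
N·L = L₁·M with L, L₁ of 2D Schrödinger form, then in the (unique) normal form
Σ n_ij ∂x^i ∂y^j of N all coefficients with j ≥ 1 vanish. The ring R models
K[∂x,∂y]: the Ore commutation relations hold and the normal-form monomials
∂x^i ∂y^j are left-linearly independent over K. -/
namespace Stmt9Aux

variable {K R : Type*} [Field K] [Ring R]

def Ord (φ : K →+* R) (D : R) (v : ℕ → K) (I : ℕ) : R :=
  ∑ i ∈ Finset.range I, φ (v i) * D ^ i

lemma ord_congr (φ : K →+* R) (D : R) (v w : ℕ → K) (I : ℕ)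
    (h : ∀ i < I, v i = w i) : Ord φ D v I = Ord φ D w I :=
  Finset.sum_congr rfl fun i hi => by rw [h i (Finset.mem_range.mp hi)]

lemma ord_zero (φ : K →+* R) (D : R) (I : ℕ) : Ord φ D (fun _ => 0) I = 0 := by
  simp [Ord]

lemma ord_add (φ : K →+* R) (D : R) (v w : ℕ → K) (I : ℕ) :
    Ord φ D (fun i => v i + w i) I = Ord φ D v I + Ord φ D w I := by
  simp [Ord, add_mul, Finset.sum_add_distrib]

lemma ord_add4 (φ : K →+* R) (D : R) (p q r s : ℕ → K) (I : ℕ) :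
    Ord φ D (fun i => p i + q i + r i + s i) I
      = Ord φ D p I + Ord φ D q I + Ord φ D r I + Ord φ D s I := by
  simp [Ord, add_mul, Finset.sum_add_distrib]

lemma ord_sub (φ : K →+* R) (D : R) (v w : ℕ → K) (I : ℕ) :
    Ord φ D (fun i => v i - w i) I = Ord φ D v I - Ord φ D w I := by
  simp [Ord, sub_mul, Finset.sum_sub_distrib]

lemma ord_pad (φ : K →+* R) (D : R) (v : ℕ → K) {I I' : ℕ} (h : I ≤ I') :
    Ord φ D (fun i => if i < I then v i else 0) I' = Ord φ D v I := by
  unfold Ord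
  rw [← Finset.sum_subset (Finset.range_subset_range.mpr h)
      (fun i _ hni => by
        simp only []
        rw [if_neg (by simpa using hni), map_zero, zero_mul])]
  exact Finset.sum_congr rfl fun i hi => by
    simp only []
    rw [if_pos (Finset.mem_range.mp hi)]

lemma ord_sum (φ : K →+* R) (D : R) (p : ℕ → ℕ → K) (s : Finset ℕ) (I : ℕ) :
    ∑ j ∈ s, Ord φ D (p j) I = Ord φ D (fun i => ∑ j ∈ s, p j i) I := by
  unfold Ord
  rw [Finset.sum_comm]
  exact Finset.sum_congr rfl fun i _ => by rw [map_sum, Finset.sum_mul]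

lemma ord_mul_D (φ : K →+* R) (D : R) (v : ℕ → K) (I : ℕ) :
    Ord φ D v I * D = Ord φ D (fun k => if k = 0 then 0 else v (k-1)) (I+1) := by
  unfold Ord
  rw [Finset.sum_mul, Finset.sum_range_succ' (fun k => φ (if k = 0 then 0 else v (k-1)) * D ^ k) I]
  simp [pow_succ, mul_assoc]

lemma phi_mul_ord (φ : K →+* R) (D : R) (f : K) (v : ℕ → K) (I : ℕ) :
    φ f * Ord φ D v I = Ord φ D (fun i => f * v i) I := by
  unfold Ord
  rw [Finset.mul_sum]
  exact Finset.sum_congr rfl fun i _ => by rw [← mul_assoc, ← map_mul]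

lemma D_mul_ord (φ : K →+* R) (D : R) (der : K →+ K)
    (hD : ∀ f : K, D * φ f = φ f * D + φ (der f)) (v : ℕ → K) (I : ℕ) :
    D * Ord φ D v I
      = Ord φ D (fun k => (if k = 0 then 0 else v (k-1)) + (if k < I then der (v k) else 0)) (I+1) := by
  have h1 : D * Ord φ D v I = Ord φ D v I * D + Ord φ D (fun i => der (v i)) I := by
    unfold Ord
    rw [Finset.mul_sum, Finset.sum_mul, ← Finset.sum_add_distrib]
    refine Finset.sum_congr rfl fun i _ => ?_
    rw [← mul_assoc, hD, add_mul, mul_assoc, mul_assoc, ← pow_succ, ← pow_succ']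
  have h2 := ord_mul_D φ D v I
  have h3 : Ord φ D (fun i => der (v i)) I
      = Ord φ D (fun k => if k < I then der (v k) else 0) (I+1) :=
    (ord_pad φ D _ (Nat.le_succ I)).symm
  rw [h1, h2, h3]
  exact (ord_add φ D _ _ (I+1)).symm

lemma pow_mul_phi (φ : K →+* R) (D : R) (der : K →+ K)
    (hD : ∀ f : K, D * φ f = φ f * D + φ (der f)) (f : K) :
    ∀ i : ℕ, ∃ q : ℕ → K, D ^ i * φ f = Ord φ D q (i+1) := by
  intro i
  induction i with
  | zero => exact ⟨fun _ => f, by simp [Ord]⟩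
  | succ i ih =>
    obtain ⟨q, hq⟩ := ih
    refine ⟨fun k => (if k = 0 then 0 else q (k-1)) + (if k < i+1 then der (q k) else 0), ?_⟩
    rw [pow_succ', mul_assoc, hq]
    exact D_mul_ord φ D der hD q (i+1)

lemma sum_swap_tri {M : Type*} [AddCommMonoid M] (F : ℕ → ℕ → M) (J t : ℕ) :
    ∑ j ∈ Finset.range J, ∑ k ∈ Finset.range (j+1+t), F j k
      = ∑ k ∈ Finset.range (J+t), ∑ j ∈ Finset.range J, if k ≤ j + t then F j k else 0 := by
  rw [Finset.sum_comm]
  refine Finset.sum_congr rfl fun j hj => ?_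
  have hj' := Finset.mem_range.mp hj
  have hfil : Finset.range (j+1+t) = (Finset.range (J+t)).filter (fun k => k ≤ j + t) := by
    ext k
    simp only [Finset.mem_range, Finset.mem_filter]
    omega
  rw [hfil, Finset.sum_filter]


lemma ord_mul_phi (φ : K →+* R) (D : R) (der : K →+ K)
    (hD : ∀ f : K, D * φ f = φ f * D + φ (der f)) (v : ℕ → K) (I : ℕ) (f : K) :
    ∃ w : ℕ → K, Ord φ D v I * φ f = Ord φ D w I
      ∧ ∀ k, (∀ i', k ≤ i' → i' < I → v i' = 0) → w k = 0 := by
  choose q hq using fun i => pow_mul_phi φ D der hD f i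
  refine ⟨fun k => ∑ i ∈ Finset.range I, if k ≤ i then v i * q i k else 0, ?_, ?_⟩
  · have h1 : Ord φ D v I * φ f
        = ∑ i ∈ Finset.range I, ∑ k ∈ Finset.range (i+1), φ (v i * q i k) * D ^ k := by
      unfold Ord
      rw [Finset.sum_mul]
      refine Finset.sum_congr rfl fun i _ => ?_
      rw [mul_assoc, hq i]
      unfold Ord
      rw [Finset.mul_sum]
      refine Finset.sum_congr rfl fun k _ => ?_
      rw [← mul_assoc, ← map_mul]
    rw [h1]
    have h2 := sum_swap_tri (fun i k => φ (v i * q i k) * D ^ k) I 0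
    simp only [Nat.add_zero] at h2
    rw [h2]
    unfold Ord
    refine Finset.sum_congr rfl fun k _ => ?_
    simp only []
    rw [map_sum, Finset.sum_mul]
    refine Finset.sum_congr rfl fun i _ => ?_
    rw [apply_ite φ, map_zero, ite_mul, zero_mul]
  · intro k hk
    refine Finset.sum_eq_zero fun i hi => ?_
    by_cases h : k ≤ i
    · rw [if_pos h, hk i h (Finset.mem_range.mp hi), zero_mul]
    · rw [if_neg h]

lemma dy_mul_ordX (φ : K →+* R) (Dx Dy : R) (dy : K →+ K)
    (hDy : ∀ f : K, Dy * φ f = φ f * Dy + φ (dy f))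
    (hD : Dx * Dy = Dy * Dx) (v : ℕ → K) (I : ℕ) :
    Dy * Ord φ Dx v I = Ord φ Dx v I * Dy + Ord φ Dx (fun i => dy (v i)) I := by
  unfold Ord
  rw [Finset.mul_sum, Finset.sum_mul, ← Finset.sum_add_distrib]
  refine Finset.sum_congr rfl fun i _ => ?_
  have hc : Dy * Dx ^ i = Dx ^ i * Dy := ((show Commute Dx Dy from hD).symm.pow_right i).eq
  rw [← mul_assoc, hDy, add_mul, mul_assoc, hc, ← mul_assoc]

lemma sum_trunc (φ : K →+* R) (D Dy : R) (p : ℕ → ℕ → K) (I' j : ℕ) :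
    ∑ k ∈ Finset.range (j+2), Ord φ D (fun i => if k ≤ j then p k i else 0) I' * Dy ^ k
      = ∑ k ∈ Finset.range (j+1), Ord φ D (p k) I' * Dy ^ k := by
  rw [show j + 2 = (j+1) + 1 from rfl, Finset.sum_range_succ]
  rw [show Ord φ D (fun i => if j + 1 ≤ j then p (j+1) i else 0) I' = 0 from
    (ord_congr φ D _ (fun _ => 0) I' (fun i _ => if_neg (by omega))).trans (ord_zero φ D I')]
  rw [zero_mul, add_zero]
  refine Finset.sum_congr rfl fun k hk => ?_
  have hk' : k ≤ j := by
    have := Finset.mem_range.mp hk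
    omega
  exact congrArg (· * Dy ^ k) (ord_congr φ D _ _ I' (fun i _ => if_pos hk'))


lemma row_lemma (φ : K →+* R) (Dx Dy : R) (dx dy : K →+ K)
    (hDx : ∀ f : K, Dx * φ f = φ f * Dx + φ (dx f))
    (hDy : ∀ f : K, Dy * φ f = φ f * Dy + φ (dy f))
    (hD : Dx * Dy = Dy * Dx)
    (a b c : K) (v : ℕ → K) (I j : ℕ) :
    ∃ P : ℕ → ℕ → K,
      (Ord φ Dx v I * Dy ^ j * (Dx * Dy + φ a * Dx + φ b * Dy + φ c)
        = ∑ k ∈ Finset.range (j+2), Ord φ Dx (P k) (I+1) * Dy ^ k)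
      ∧ ∀ i, (∀ i', i < i' → i' < I → v i' = 0) → P (j+1) (i+1) = v i := by
  obtain ⟨ra, hra⟩ := pow_mul_phi φ Dy dy hDy a j
  obtain ⟨rb, hrb⟩ := pow_mul_phi φ Dy dy hDy b j
  obtain ⟨rc, hrc⟩ := pow_mul_phi φ Dy dy hDy c j
  choose wa hwa hwa0 using fun k => ord_mul_phi φ Dx dx hDx v I (ra k)
  choose wb hwb hwb0 using fun k => ord_mul_phi φ Dx dx hDx v I (rb k)
  choose wc hwc hwc0 using fun k => ord_mul_phi φ Dx dx hDx v I (rc k)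
  have hcomm : ∀ k : ℕ, Dy ^ k * Dx = Dx * Dy ^ k :=
    fun k => ((show Commute Dx Dy from hD).pow_right k).eq.symm
  have hT1 : Ord φ Dx v I * Dy ^ j * (Dx * Dy)
      = Ord φ Dx (fun i => if i = 0 then 0 else v (i-1)) (I+1) * Dy ^ (j+1) := by
    have h1 : Dy ^ j * (Dx * Dy) = Dx * Dy ^ (j+1) := by
      rw [← mul_assoc, hcomm j, mul_assoc, ← pow_succ]
    rw [mul_assoc, h1, ← mul_assoc, ord_mul_D]
  have hT2 : Ord φ Dx v I * Dy ^ j * (φ a * Dx)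
      = ∑ k ∈ Finset.range (j+1), Ord φ Dx (fun i => if i = 0 then 0 else wa k (i-1)) (I+1) * Dy ^ k := by
    rw [mul_assoc, ← mul_assoc (Dy ^ j), hra]
    have h2 : Ord φ Dy ra (j+1) * Dx = ∑ k ∈ Finset.range (j+1), φ (ra k) * Dx * Dy ^ k := by
      unfold Ord
      rw [Finset.sum_mul]
      exact Finset.sum_congr rfl fun k _ => by rw [mul_assoc, hcomm k, ← mul_assoc]
    rw [h2, Finset.mul_sum]
    refine Finset.sum_congr rfl fun k _ => ?_
    rw [← mul_assoc, ← mul_assoc, hwa k, ord_mul_D]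
  have hT3 : Ord φ Dx v I * Dy ^ j * (φ b * Dy)
      = ∑ k ∈ Finset.range (j+1), Ord φ Dx (wb k) I * Dy ^ (k+1) := by
    rw [mul_assoc, ← mul_assoc (Dy ^ j), hrb]
    have h2 : Ord φ Dy rb (j+1) * Dy = ∑ k ∈ Finset.range (j+1), φ (rb k) * Dy ^ (k+1) := by
      unfold Ord
      rw [Finset.sum_mul]
      exact Finset.sum_congr rfl fun k _ => by rw [mul_assoc, ← pow_succ]
    rw [h2, Finset.mul_sum]
    refine Finset.sum_congr rfl fun k _ => ?_
    rw [← mul_assoc, hwb k]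
  have hT4 : Ord φ Dx v I * Dy ^ j * φ c
      = ∑ k ∈ Finset.range (j+1), Ord φ Dx (wc k) I * Dy ^ k := by
    rw [mul_assoc, hrc]
    have e : Ord φ Dy rc (j+1) = ∑ k ∈ Finset.range (j+1), φ (rc k) * Dy ^ k := rfl
    rw [e, Finset.mul_sum]
    exact Finset.sum_congr rfl fun k _ => by rw [← mul_assoc, hwc k]
  set p1 : ℕ → ℕ → K := fun k i => if k = j+1 then (if i = 0 then 0 else v (i-1)) else 0 with hp1
  set p2 : ℕ → ℕ → K := fun k i => if k ≤ j then (if i = 0 then 0 else wa k (i-1)) else 0 with hp2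
  set p3 : ℕ → ℕ → K := fun k i => if 1 ≤ k then (if i < I then wb (k-1) i else 0) else 0 with hp3
  set p4 : ℕ → ℕ → K := fun k i => if k ≤ j then (if i < I then wc k i else 0) else 0 with hp4
  have g1 : (∑ k ∈ Finset.range (j+2), Ord φ Dx (p1 k) (I+1) * Dy ^ k)
      = Ord φ Dx (fun i => if i = 0 then 0 else v (i-1)) (I+1) * Dy ^ (j+1) := by
    have h := Finset.sum_eq_single_of_mem (s := Finset.range (j+2))
      (f := fun k => Ord φ Dx (p1 k) (I+1) * Dy ^ k) (j+1)
      (Finset.mem_range.mpr (by omega))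
      (fun k _ hne => by
        rw [(ord_congr φ Dx (p1 k) (fun _ => 0) (I+1)
          (fun i _ => by rw [hp1]; simp [hne])).trans (ord_zero φ Dx (I+1)), zero_mul])
    rw [h]
    exact congrArg (· * Dy ^ (j+1)) (ord_congr φ Dx _ _ _ (fun i _ => by rw [hp1]; simp))
  have g2 : (∑ k ∈ Finset.range (j+2), Ord φ Dx (p2 k) (I+1) * Dy ^ k)
      = ∑ k ∈ Finset.range (j+1), Ord φ Dx (fun i => if i = 0 then 0 else wa k (i-1)) (I+1) * Dy ^ k := by
    rw [hp2]
    exact sum_trunc φ Dx Dy (fun k i => if i = 0 then 0 else wa k (i-1)) (I+1) j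
  have g4 : (∑ k ∈ Finset.range (j+2), Ord φ Dx (p4 k) (I+1) * Dy ^ k)
      = ∑ k ∈ Finset.range (j+1), Ord φ Dx (wc k) I * Dy ^ k := by
    rw [hp4]
    refine (sum_trunc φ Dx Dy (fun k i => if i < I then wc k i else 0) (I+1) j).trans ?_
    exact Finset.sum_congr rfl fun k _ =>
      congrArg (· * Dy ^ k) (ord_pad φ Dx (wc k) (Nat.le_succ I))
  have g3 : (∑ k ∈ Finset.range (j+2), Ord φ Dx (p3 k) (I+1) * Dy ^ k)
      = ∑ k ∈ Finset.range (j+1), Ord φ Dx (wb k) I * Dy ^ (k+1) := by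
    rw [show j + 2 = (j+1) + 1 from rfl, Finset.sum_range_succ']
    have h0 : Ord φ Dx (p3 0) (I+1) * Dy ^ 0 = 0 := by
      rw [(ord_congr φ Dx (p3 0) (fun _ => 0) (I+1)
        (fun i _ => by rw [hp3]; simp)).trans (ord_zero φ Dx (I+1)), zero_mul]
    rw [h0, add_zero]
    refine Finset.sum_congr rfl fun k _ => ?_
    have h1 : Ord φ Dx (p3 (k+1)) (I+1) = Ord φ Dx (wb k) I := by
      refine (ord_congr φ Dx (p3 (k+1)) (fun i => if i < I then wb k i else 0) (I+1)
        (fun i _ => by rw [hp3]; simp)).trans ?_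
      exact ord_pad φ Dx (wb k) (Nat.le_succ I)
    rw [h1]
  refine ⟨fun k i => p1 k i + p2 k i + p3 k i + p4 k i, ?_, ?_⟩
  · rw [mul_add, mul_add, mul_add, hT1, hT2, hT3, hT4]
    symm
    calc (∑ k ∈ Finset.range (j + 2),
            Ord φ Dx (fun i => p1 k i + p2 k i + p3 k i + p4 k i) (I + 1) * Dy ^ k)
        = ∑ k ∈ Finset.range (j + 2),
            (Ord φ Dx (p1 k) (I+1) + Ord φ Dx (p2 k) (I+1) + Ord φ Dx (p3 k) (I+1)
              + Ord φ Dx (p4 k) (I+1)) * Dy ^ k :=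
          Finset.sum_congr rfl fun k _ =>
            congrArg (· * Dy ^ k) (ord_add4 φ Dx (p1 k) (p2 k) (p3 k) (p4 k) (I+1))
      _ = (∑ k ∈ Finset.range (j+2), Ord φ Dx (p1 k) (I+1) * Dy ^ k)
          + (∑ k ∈ Finset.range (j+2), Ord φ Dx (p2 k) (I+1) * Dy ^ k)
          + (∑ k ∈ Finset.range (j+2), Ord φ Dx (p3 k) (I+1) * Dy ^ k)
          + (∑ k ∈ Finset.range (j+2), Ord φ Dx (p4 k) (I+1) * Dy ^ k) := by
            simp only [add_mul, Finset.sum_add_distrib]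
      _ = _ := by rw [g1, g2, g3, g4]
  · intro i hi
    have hwbz : wb j (i+1) = 0 := hwb0 j (i+1) (fun i' h1 h2 => hi i' (by omega) h2)
    simp only []
    rw [hp1, hp2, hp3, hp4]
    simp only []
    have e1 : ¬ (i + 1 = 0) := by omega
    have e2 : ¬ (j + 1 ≤ j) := by omega
    have e3 : 1 ≤ j + 1 := by omega
    simp [e1, e2, e3, hwbz]


lemma rhs_lemma (φ : K →+* R) (Dx Dy : R) (dx dy : K →+ K)
    (hDx : ∀ f : K, Dx * φ f = φ f * Dx + φ (dx f))
    (hDy : ∀ f : K, Dy * φ f = φ f * Dy + φ (dy f))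
    (hD : Dx * Dy = Dy * Dx)
    (a₁ b₁ c₁ : K) (m : ℕ → K) (dM : ℕ) :
    ∃ (I' : ℕ) (T1 T0 : ℕ → K),
      (Dx * Dy + φ a₁ * Dx + φ b₁ * Dy + φ c₁) * (∑ i ∈ Finset.range (dM+1), φ (m i) * Dx ^ i)
        = Ord φ Dx T1 I' * Dy + Ord φ Dx T0 I' := by
  have hM : (∑ i ∈ Finset.range (dM+1), φ (m i) * Dx ^ i) = Ord φ Dx m (dM+1) := rfl
  rw [hM]
  have h1 := dy_mul_ordX φ Dx Dy dy hDy hD m (dM+1)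
  have h2 := D_mul_ord φ Dx dx hDx m (dM+1)
  have h3 := D_mul_ord φ Dx dx hDx (fun i => dy (m i)) (dM+1)
  refine ⟨dM+2,
    fun i => ((if i = 0 then 0 else m (i-1)) + (if i < dM+1 then dx (m i) else 0))
      + (if i < dM+1 then b₁ * m i else 0),
    fun i => (((if i = 0 then 0 else dy (m (i-1))) + (if i < dM+1 then dx (dy (m i)) else 0))
      + a₁ * ((if i = 0 then 0 else m (i-1)) + (if i < dM+1 then dx (m i) else 0)))
      + (if i < dM+1 then b₁ * dy (m i) + c₁ * m i else 0), ?_⟩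
  have t1 : Dx * Dy * Ord φ Dx m (dM+1)
      = Ord φ Dx (fun k => (if k = 0 then 0 else m (k-1)) + (if k < dM+1 then dx (m k) else 0)) (dM+2) * Dy
        + Ord φ Dx (fun k => (if k = 0 then 0 else dy (m (k-1))) + (if k < dM+1 then dx (dy (m k)) else 0)) (dM+2) := by
    rw [mul_assoc, h1, mul_add, ← mul_assoc, h2]
    congr 1
  have t2 : φ a₁ * Dx * Ord φ Dx m (dM+1)
      = Ord φ Dx (fun k => a₁ * ((if k = 0 then 0 else m (k-1)) + (if k < dM+1 then dx (m k) else 0))) (dM+2) := by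
    rw [mul_assoc, h2, phi_mul_ord]
  have t3 : φ b₁ * Dy * Ord φ Dx m (dM+1)
      = Ord φ Dx (fun i => b₁ * m i) (dM+1) * Dy + Ord φ Dx (fun i => b₁ * dy (m i)) (dM+1) := by
    rw [mul_assoc, h1, mul_add, ← mul_assoc, phi_mul_ord]
    congr 1
    rw [phi_mul_ord]
  have t4 : φ c₁ * Ord φ Dx m (dM+1) = Ord φ Dx (fun i => c₁ * m i) (dM+1) := phi_mul_ord φ Dx c₁ m (dM+1)
  have hTa : Ord φ Dx (fun i => ((if i = 0 then 0 else m (i-1)) + (if i < dM+1 then dx (m i) else 0))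
        + (if i < dM+1 then b₁ * m i else 0)) (dM+2)
      = Ord φ Dx (fun k => (if k = 0 then 0 else m (k-1)) + (if k < dM+1 then dx (m k) else 0)) (dM+2)
        + Ord φ Dx (fun i => b₁ * m i) (dM+1) := by
    refine (ord_add φ Dx _ _ (dM+2)).trans ?_
    exact congrArg _ (ord_pad φ Dx (fun i => b₁ * m i) (by omega))
  have hTb : Ord φ Dx (fun i => (((if i = 0 then 0 else dy (m (i-1))) + (if i < dM+1 then dx (dy (m i)) else 0))
        + a₁ * ((if i = 0 then 0 else m (i-1)) + (if i < dM+1 then dx (m i) else 0)))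
        + (if i < dM+1 then b₁ * dy (m i) + c₁ * m i else 0)) (dM+2)
      = (Ord φ Dx (fun k => (if k = 0 then 0 else dy (m (k-1))) + (if k < dM+1 then dx (dy (m k)) else 0)) (dM+2)
          + Ord φ Dx (fun k => a₁ * ((if k = 0 then 0 else m (k-1)) + (if k < dM+1 then dx (m k) else 0))) (dM+2))
        + (Ord φ Dx (fun i => b₁ * dy (m i)) (dM+1) + Ord φ Dx (fun i => c₁ * m i) (dM+1)) := by
    refine (ord_add φ Dx _ _ (dM+2)).trans ?_
    refine congrArg₂ (· + ·) (ord_add φ Dx _ _ (dM+2)) ?_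
    refine (ord_pad φ Dx (fun i => b₁ * dy (m i) + c₁ * m i) (by omega)).trans ?_
    exact ord_add φ Dx _ _ (dM+1)
  rw [add_mul, add_mul, add_mul, t1, t2, t3, t4, hTa, hTb, add_mul]
  abel

end Stmt9Aux

open Stmt9Aux

theorem stmt9 {K R : Type*} [Field K] [Ring R]
    (dx dy : K →+ K)
    (hdx : ∀ f g : K, dx (f * g) = f * dx g + dx f * g)
    (hdy : ∀ f g : K, dy (f * g) = f * dy g + dy f * g)
    (hcomm : ∀ f : K, dx (dy f) = dy (dx f))
    (φ : K →+* R) (Dx Dy : R)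
    (hDx : ∀ f : K, Dx * φ f = φ f * Dx + φ (dx f))
    (hDy : ∀ f : K, Dy * φ f = φ f * Dy + φ (dy f))
    (hD : Dx * Dy = Dy * Dx)
    (hindep : ∀ (p : ℕ → ℕ → K) (I J : ℕ),
      (∑ i ∈ Finset.range I, ∑ j ∈ Finset.range J, φ (p i j) * Dx ^ i * Dy ^ j) = 0 →
      ∀ i < I, ∀ j < J, p i j = 0)
    (a b c a₁ b₁ c₁ : K) (m : ℕ → K) (dM : ℕ) (n : ℕ → ℕ → K) (I J : ℕ)
    (hM0 : (∑ i ∈ Finset.range (dM + 1), φ (m i) * Dx ^ i) ≠ 0)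
    (hrel : (∑ i ∈ Finset.range I, ∑ j ∈ Finset.range J, φ (n i j) * Dx ^ i * Dy ^ j)
          * (Dx * Dy + φ a * Dx + φ b * Dy + φ c)
        = (Dx * Dy + φ a₁ * Dx + φ b₁ * Dy + φ c₁)
          * (∑ i ∈ Finset.range (dM + 1), φ (m i) * Dx ^ i)) :
    ∀ i < I, ∀ j < J, 1 ≤ j → n i j = 0 := by
  classical
  obtain ⟨I', T1, T0, hT⟩ := rhs_lemma φ Dx Dy dx dy hDx hDy hD a₁ b₁ c₁ m dM
  have main : ∀ d : ℕ, 1 ≤ d → d < J →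
      (∀ i' < I, ∀ j' < J, d + 1 ≤ j' → n i' j' = 0) →
      ∀ i < I, n i d = 0 := by
    intro d hd1 hdJ H
    choose P hP hPtop using fun j : ℕ =>
      row_lemma φ Dx Dy dx dy hDx hDy hD a b c (fun i => n i j) I j
    have hrel2 := hrel
    have hN : (∑ i ∈ Finset.range I, ∑ j ∈ Finset.range J, φ (n i j) * Dx ^ i * Dy ^ j)
        = ∑ j ∈ Finset.range (d+1), Ord φ Dx (fun i => n i j) I * Dy ^ j := by
      rw [Finset.sum_comm]
      have h1 : (∑ j ∈ Finset.range J, ∑ i ∈ Finset.range I, φ (n i j) * Dx ^ i * Dy ^ j)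
          = ∑ j ∈ Finset.range J, Ord φ Dx (fun i => n i j) I * Dy ^ j :=
        Finset.sum_congr rfl fun j _ => (Finset.sum_mul _ _ _).symm
      rw [h1]
      refine (Finset.sum_subset (Finset.range_subset_range.mpr (by omega)) ?_).symm
      intro j hj hnj
      have hj2 := Finset.mem_range.mp hj
      have hj1 : d + 1 ≤ j := by
        have : ¬ j < d + 1 := fun hlt => hnj (Finset.mem_range.mpr hlt)
        omega
      have hz : Ord φ Dx (fun i => n i j) I = 0 :=
        Finset.sum_eq_zero fun i hi => by
          simp only []
          rw [H i (Finset.mem_range.mp hi) j hj2 hj1, map_zero, zero_mul]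
      rw [hz, zero_mul]
    rw [hN, Finset.sum_mul] at hrel2
    rw [show (∑ j ∈ Finset.range (d+1),
          Ord φ Dx (fun i => n i j) I * Dy ^ j * (Dx * Dy + φ a * Dx + φ b * Dy + φ c))
        = ∑ j ∈ Finset.range (d+1), ∑ k ∈ Finset.range (j+2), Ord φ Dx (P j k) (I+1) * Dy ^ k
      from Finset.sum_congr rfl fun j _ => hP j] at hrel2
    rw [hT] at hrel2
    have hswap : (∑ j ∈ Finset.range (d+1), ∑ k ∈ Finset.range (j+2),
          Ord φ Dx (P j k) (I+1) * Dy ^ k)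
        = ∑ k ∈ Finset.range (d+2), ∑ j ∈ Finset.range (d+1),
            if k ≤ j + 1 then Ord φ Dx (P j k) (I+1) * Dy ^ k else 0 :=
      sum_swap_tri _ (d+1) 1
    rw [hswap] at hrel2
    set S : ℕ → ℕ → K := fun k i => ∑ j ∈ Finset.range (d+1), if k ≤ j + 1 then P j k i else 0
      with hSdef
    have hcollapse : (∑ k ∈ Finset.range (d+2), ∑ j ∈ Finset.range (d+1),
          if k ≤ j + 1 then Ord φ Dx (P j k) (I+1) * Dy ^ k else 0)
        = ∑ k ∈ Finset.range (d+2), Ord φ Dx (S k) (I+1) * Dy ^ k := by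
      refine Finset.sum_congr rfl fun k _ => ?_
      have h1 : ∀ j ∈ Finset.range (d+1),
          (if k ≤ j + 1 then Ord φ Dx (P j k) (I+1) * Dy ^ k else 0)
            = Ord φ Dx (fun i => if k ≤ j + 1 then P j k i else 0) (I+1) * Dy ^ k := by
        intro j _
        by_cases h : k ≤ j + 1
        · rw [if_pos h]
          exact congrArg (· * Dy ^ k)
            (ord_congr φ Dx (P j k) (fun i => if k ≤ j + 1 then P j k i else 0) (I+1)
              (fun i _ => (if_pos h).symm)).symm ▸ rfl
        · rw [if_neg h]
          rw [show Ord φ Dx (fun i => if k ≤ j + 1 then P j k i else 0) (I+1) = 0 from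
            (ord_congr φ Dx _ (fun _ => 0) (I+1) (fun i _ => if_neg h)).trans
              (ord_zero φ Dx (I+1)), zero_mul]
      calc (∑ j ∈ Finset.range (d+1), if k ≤ j + 1 then Ord φ Dx (P j k) (I+1) * Dy ^ k else 0)
          = ∑ j ∈ Finset.range (d+1),
              Ord φ Dx (fun i => if k ≤ j + 1 then P j k i else 0) (I+1) * Dy ^ k :=
            Finset.sum_congr rfl h1
        _ = (∑ j ∈ Finset.range (d+1),
              Ord φ Dx (fun i => if k ≤ j + 1 then P j k i else 0) (I+1)) * Dy ^ k :=
            (Finset.sum_mul _ _ _).symm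
        _ = Ord φ Dx (S k) (I+1) * Dy ^ k :=
            congrArg (· * Dy ^ k) (ord_sum φ Dx _ _ _)
    rw [hcollapse] at hrel2
    set IB := max (I+1) I' with hIB
    have hIB1 : I + 1 ≤ IB := le_max_left _ _
    have hIB2 : I' ≤ IB := le_max_right _ _
    set G : ℕ → ℕ → K := fun k i =>
        (if i < I + 1 then S k i else 0)
        - (if k = 0 then (if i < I' then T0 i else 0)
           else if k = 1 then (if i < I' then T1 i else 0) else 0) with hGdef
    have hE : (∑ i ∈ Finset.range IB, ∑ k ∈ Finset.range (d+2),
        φ (G k i) * Dx ^ i * Dy ^ k) = 0 := by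
      rw [Finset.sum_comm]
      have h1 : ∀ k ∈ Finset.range (d+2),
          (∑ i ∈ Finset.range IB, φ (G k i) * Dx ^ i * Dy ^ k)
            = Ord φ Dx (S k) (I+1) * Dy ^ k
              - Ord φ Dx (fun i => if k = 0 then (if i < I' then T0 i else 0)
                  else if k = 1 then (if i < I' then T1 i else 0) else 0) IB * Dy ^ k := by
        intro k _
        calc (∑ i ∈ Finset.range IB, φ (G k i) * Dx ^ i * Dy ^ k)
            = Ord φ Dx (G k) IB * Dy ^ k := (Finset.sum_mul _ _ _).symm
          _ = (Ord φ Dx (fun i => if i < I + 1 then S k i else 0) IB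
                - Ord φ Dx (fun i => if k = 0 then (if i < I' then T0 i else 0)
                    else if k = 1 then (if i < I' then T1 i else 0) else 0) IB) * Dy ^ k :=
              congrArg (· * Dy ^ k) (ord_sub φ Dx _ _ IB)
          _ = Ord φ Dx (S k) (I+1) * Dy ^ k
              - Ord φ Dx (fun i => if k = 0 then (if i < I' then T0 i else 0)
                  else if k = 1 then (if i < I' then T1 i else 0) else 0) IB * Dy ^ k := by
              rw [sub_mul, ord_pad φ Dx (S k) hIB1]
      rw [Finset.sum_congr rfl h1, Finset.sum_sub_distrib, hrel2]
      have h2 : (∑ k ∈ Finset.range (d+2),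
            Ord φ Dx (fun i => if k = 0 then (if i < I' then T0 i else 0)
              else if k = 1 then (if i < I' then T1 i else 0) else 0) IB * Dy ^ k)
          = Ord φ Dx T0 I' + Ord φ Dx T1 I' * Dy := by
        rw [← Finset.sum_subset
          (show ({0, 1} : Finset ℕ) ⊆ Finset.range (d+2) from by
            intro x hx
            simp only [Finset.mem_insert, Finset.mem_singleton] at hx
            rcases hx with rfl | rfl <;> exact Finset.mem_range.mpr (by omega))
          (fun k _ hk => by
            simp only [Finset.mem_insert, Finset.mem_singleton] at hk
            push_neg at hk
            rw [show Ord φ Dx (fun i => if k = 0 then (if i < I' then T0 i else 0)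
                else if k = 1 then (if i < I' then T1 i else 0) else 0) IB = 0 from
              (ord_congr φ Dx _ (fun _ => 0) IB
                (fun i _ => by rw [if_neg hk.1, if_neg hk.2])).trans (ord_zero φ Dx IB),
              zero_mul])]
        rw [Finset.sum_pair (show (0:ℕ) ≠ 1 by omega)]
        congr 1
        · rw [pow_zero, mul_one]
          exact (ord_congr φ Dx _ (fun i => if i < I' then T0 i else 0) IB
            (fun i _ => by simp)).trans (ord_pad φ Dx T0 hIB2)
        · rw [pow_one]
          exact congrArg (· * Dy) ((ord_congr φ Dx _ (fun i => if i < I' then T1 i else 0) IB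
            (fun i _ => by simp)).trans (ord_pad φ Dx T1 hIB2))
      rw [h2, add_comm]
      exact sub_self _
    have hvan := hindep (fun i k => G k i) IB (d+2) hE
    have hStop : ∀ i < I + 1, S (d+1) i = 0 := by
      intro i hi
      have h := hvan i (lt_of_lt_of_le hi hIB1) (d+1) (by omega)
      rw [hGdef] at h
      simp only [] at h
      rw [if_pos hi, if_neg (show ¬ (d+1 = 0) by omega),
        if_neg (show ¬ (d+1 = 1) by omega), sub_zero] at h
      exact h
    have hrow : ∀ s : ℕ, ∀ i, i < I → I ≤ i + s → n i d = 0 := by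
      intro s
      induction s with
      | zero => intro i hi hle; omega
      | succ s ih =>
        intro i hi hle
        have hhyp : ∀ i', i < i' → i' < I → n i' d = 0 := fun i' h1 h2 => ih i' h2 (by omega)
        have htop : P d (d+1) (i+1) = n i d := hPtop d i hhyp
        have hSi : S (d+1) (i+1) = P d (d+1) (i+1) := by
          rw [hSdef]
          simp only []
          rw [Finset.sum_eq_single_of_mem d (Finset.mem_range.mpr (by omega))
            (fun j hj hne => if_neg (by
              have := Finset.mem_range.mp hj
              omega))]
          rw [if_pos (by omega)]
        rw [← htop, ← hSi]
        exact hStop (i+1) (by omega)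
    intro i hi
    exact hrow I i hi (by omega)
  have outer : ∀ t : ℕ, ∀ i < I, ∀ j < J, 1 ≤ j → J - t ≤ j → n i j = 0 := by
    intro t
    induction t with
    | zero => intro i hi j hj h1 hge; omega
    | succ t ih =>
      intro i hi j hj h1 hge
      by_cases hj2 : J - t ≤ j
      · exact ih i hi j hj h1 hj2
      · have hd : j + 1 = J - t := by omega
        exact main j h1 hj
          (fun i' hi' j' hj' hge' => ih i' hi' j' hj' (by omega) (by omega)) i hi
  intro i hi j hj h1
  exact outer J i hi j hj h1 (by omega)
end

section
/- Let K be a differential field with commuting derivations ∂x, ∂y, let L = ∂x∂y + a∂x + b∂y + c with a, b, c ∈ K and Laplace invariant k = ∂y(b) + ab − c ≠ 0. Let M = M^y + m₀ + M^x where M^y = Σ_{j=1}^{d₂} βⱼ∂yʲ with β_{d₂} ≠ 0 and M^x = Σ_{i=1}^{d₁} αᵢ∂xⁱ. Then there exist an operator A ∈ K[∂y] of order d₂ − 1 and r ∈ K such that M·(∂x + b) − A·L = (M^x + m₀ + r)·(∂x + b) + A·k, and consequently the projection of M·(∂x + b) modulo left multiples of L has bi-degree (d₁ + 1, d₂ −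 1). -/
open Finset

section Aux

variable {K R : Type*} [Field K] [Ring R] (φ : K →+* R)

lemma pushD (d : K → K) (D : R) (hD : ∀ f : K, D * φ f = φ f * D + φ (d f)) :
    ∀ (n : ℕ) (f : K), ∃ g : ℕ → K, g n = f ∧
      D ^ n * φ f = ∑ m ∈ Finset.range (n + 1), φ (g m) * D ^ m := by
  intro n
  induction n with
  | zero => exact fun f => ⟨fun _ => f, rfl, by simp⟩
  | succ n ih =>
    intro f
    obtain ⟨g, hg, he⟩ := ih f
    refine ⟨fun m => (if m = 0 then 0 else g (m - 1)) + (if m ≤ n then d (g m) else 0),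
      by simp [hg], ?_⟩
    have h0 : D ^ (n + 1) * φ f = D * (D ^ n * φ f) := by
      rw [pow_succ', mul_assoc]
    rw [h0, he, Finset.mul_sum]
    have h2 : ∑ m ∈ Finset.range (n + 2),
        φ ((if m = 0 then 0 else g (m - 1)) + (if m ≤ n then d (g m) else 0)) * D ^ m
      = (∑ m ∈ Finset.range (n + 2), φ (if m = 0 then 0 else g (m - 1)) * D ^ m)
        + ∑ m ∈ Finset.range (n + 2), φ (if m ≤ n then d (g m) else 0) * D ^ m := by
      rw [← Finset.sum_add_distrib]
      exact Finset.sum_congr rfl fun m _ => by rw [map_add, add_mul]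
    rw [h2]
    have h3 : ∑ m ∈ Finset.range (n + 2), φ (if m = 0 then 0 else g (m - 1)) * D ^ m
        = ∑ m ∈ Finset.range (n + 1), φ (g m) * D ^ (m + 1) := by
      rw [Finset.sum_range_succ' (fun m => φ (if m = 0 then 0 else g (m - 1)) * D ^ m)]
      simp
    have h4 : ∑ m ∈ Finset.range (n + 2), φ (if m ≤ n then d (g m) else 0) * D ^ m
        = ∑ m ∈ Finset.range (n + 1), φ (d (g m)) * D ^ m := by
      rw [Finset.sum_range_succ]
      rw [if_neg (by omega)]
      simp only [map_zero, zero_mul, add_zero]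
      exact Finset.sum_congr rfl fun m hm => by
        rw [if_pos (by simpa using Nat.lt_succ_iff.mp (Finset.mem_range.mp hm))]
    rw [h3, h4, ← Finset.sum_add_distrib]
    exact Finset.sum_congr rfl fun m _ => by
      rw [← mul_assoc, hD, add_mul, mul_assoc, ← pow_succ']

lemma collectD (D : R) (n : ℕ) (t : ℕ → K) (g : ℕ → ℕ → K) :
    ∃ C : ℕ → K, C n = t n * g n n ∧
      ∑ j ∈ Finset.range (n + 1), φ (t j) * (∑ m ∈ Finset.range (j + 1), φ (g j m) * D ^ m)
        = ∑ m ∈ Finset.range (n + 1), φ (C m) * D ^ m := by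
  refine ⟨fun m => ∑ j ∈ Finset.range (n + 1), t j * (if m ≤ j then g j m else 0), ?_, ?_⟩
  · show (∑ j ∈ Finset.range (n + 1), t j * (if n ≤ j then g j n else 0)) = t n * g n n
    rw [Finset.sum_eq_single n]
    · rw [if_pos le_rfl]
    · intro j hj hjn
      rw [if_neg (by rw [Finset.mem_range] at hj; omega), mul_zero]
    · intro h; exact absurd (Finset.self_mem_range_succ n) h
  · have h1 : ∀ j ∈ Finset.range (n + 1),
        φ (t j) * (∑ m ∈ Finset.range (j + 1), φ (g j m) * D ^ m)
        = ∑ m ∈ Finset.range (n + 1), φ (t j * (if m ≤ j then g j m else 0)) * D ^ m := by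
      intro j hj
      have hsub : Finset.range (j + 1) ⊆ Finset.range (n + 1) := by
        apply Finset.range_subset_range.mpr
        rw [Finset.mem_range] at hj; omega
      have h2 : ∑ m ∈ Finset.range (n + 1), φ (t j * (if m ≤ j then g j m else 0)) * D ^ m
          = ∑ m ∈ Finset.range (j + 1), φ (t j * (if m ≤ j then g j m else 0)) * D ^ m := by
        refine (Finset.sum_subset hsub ?_).symm
        intro m _ hm
        rw [Finset.mem_range] at hm
        rw [if_neg (by omega), mul_zero, map_zero, zero_mul]
      rw [h2, Finset.mul_sum]
      exact Finset.sum_congr rfl fun m hm => by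
        rw [Finset.mem_range] at hm
        rw [if_pos (by omega), map_mul, mul_assoc]
    rw [Finset.sum_congr rfl h1, Finset.sum_comm]
    exact Finset.sum_congr rfl fun m _ => by rw [map_sum, Finset.sum_mul]

lemma divD (d : K → K) (D : R) (hD : ∀ f : K, D * φ f = φ f * D + φ (d f)) (a : K) :
    ∀ (n : ℕ) (c : ℕ → K), ∃ (γ : ℕ → K) (r : K), γ n = c (n + 1) ∧
      ∑ j ∈ Finset.range (n + 2), φ (c j) * D ^ j
        = (∑ j ∈ Finset.range (n + 1), φ (γ j) * D ^ j) * (D + φ a) + φ r := by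
  intro n
  induction n with
  | zero =>
    intro c
    refine ⟨fun _ => c 1, c 0 - c 1 * a, rfl, ?_⟩
    simp only [Finset.sum_range_succ, Finset.sum_range_zero, pow_zero, pow_one, zero_add,
      mul_one, map_sub, map_mul, mul_add]
    noncomm_ring
  | succ n ih =>
    intro c
    obtain ⟨g, hg, he⟩ := pushD φ d D hD (n + 1) a
    obtain ⟨γ', r', hγ', he'⟩ := ih (fun j => c j - c (n + 2) * g j)
    refine ⟨fun j => if j = n + 1 then c (n + 2) else γ' j, r', by simp, ?_⟩
    have htop : φ (c (n + 2)) * D ^ (n + 2)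
        = φ (c (n + 2)) * D ^ (n + 1) * (D + φ a)
          - ∑ m ∈ Finset.range (n + 2), φ (c (n + 2) * g m) * D ^ m := by
      rw [mul_add, mul_assoc, ← pow_succ, mul_assoc, he, Finset.mul_sum]
      rw [eq_sub_iff_add_eq]
      congr 1
      exact (Finset.sum_congr rfl fun m _ => by rw [map_mul, mul_assoc]).symm
    have hsplit : ∑ j ∈ Finset.range (n + 3), φ (c j) * D ^ j
        = (∑ j ∈ Finset.range (n + 2), φ (c j - c (n + 2) * g j) * D ^ j)
          + φ (c (n + 2)) * D ^ (n + 1) * (D + φ a) := by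
      rw [Finset.sum_range_succ, htop]
      have : ∑ j ∈ Finset.range (n + 2), φ (c j - c (n + 2) * g j) * D ^ j
          = (∑ j ∈ Finset.range (n + 2), φ (c j) * D ^ j)
            - ∑ j ∈ Finset.range (n + 2), φ (c (n + 2) * g j) * D ^ j := by
        rw [← Finset.sum_sub_distrib]
        exact Finset.sum_congr rfl fun j _ => by rw [map_sub, sub_mul]
      rw [this]; noncomm_ring
    rw [hsplit, he']
    have hA : ∑ j ∈ Finset.range (n + 2),
        φ (if j = n + 1 then c (n + 2) else γ' j) * D ^ j
        = (∑ j ∈ Finset.range (n + 1), φ (γ' j) * D ^ j) + φ (c (n + 2)) * D ^ (n + 1) := by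
      rw [Finset.sum_range_succ, if_pos rfl]
      congr 1
      exact Finset.sum_congr rfl fun j hj => by
        rw [Finset.mem_range] at hj
        rw [if_neg (by omega)]
    rw [hA, add_mul]
    noncomm_ring

end Aux

/- STATEMENT 10: composing a Darboux operator M (of bi-degree (d₁,d₂)) with
the Laplace operator ∂x + b: there are A = Σ γⱼ∂y^j of order d₂-1 and r ∈ K
with M(∂x+b) - A·L = (M^x + m₀ + r)(∂x+b) + A·k, and consequently the
projection of M(∂x+b) modulo left multiples of L has bi-degree (d₁+1, d₂-1). -/
theorem stmt10 {K R : Type*} [Field K] [Ring R]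
    (dx dy : K →+ K)
    (hdx : ∀ f g : K, dx (f * g) = f * dx g + dx f * g)
    (hdy : ∀ f g : K, dy (f * g) = f * dy g + dy f * g)
    (hcomm : ∀ f : K, dx (dy f) = dy (dx f))
    (φ : K →+* R) (Dx Dy : R)
    (hDx : ∀ f : K, Dx * φ f = φ f * Dx + φ (dx f))
    (hDy : ∀ f : K, Dy * φ f = φ f * Dy + φ (dy f))
    (hD : Dx * Dy = Dy * Dx)
    (a b c : K) (hk : dy b + a * b - c ≠ 0)
    (d₁ d₂ : ℕ) (hd₁ : 1 ≤ d₁) (hd₂ : 1 ≤ d₂)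
    (α β : ℕ → K) (m₀ : K) (hα : α d₁ ≠ 0) (hβ : β d₂ ≠ 0)
    (Mx My M L : R)
    (hMx : Mx = ∑ i ∈ Finset.range d₁, φ (α (i + 1)) * Dx ^ (i + 1))
    (hMy : My = ∑ j ∈ Finset.range d₂, φ (β (j + 1)) * Dy ^ (j + 1))
    (hM : M = Mx + My + φ m₀)
    (hL : L = Dx * Dy + φ a * Dx + φ b * Dy + φ c) :
    ∃ (γ : ℕ → K) (r : K),
      γ (d₂ - 1) ≠ 0 ∧
      (M * (Dx + φ b) - (∑ j ∈ Finset.range d₂, φ (γ j) * Dy ^ j) * L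
        = (Mx + φ m₀ + φ r) * (Dx + φ b)
          + (∑ j ∈ Finset.range d₂, φ (γ j) * Dy ^ j) * φ (dy b + a * b - c)) ∧
      ∃ (α' β' : ℕ → K) (m' : K),
        α' (d₁ + 1) ≠ 0 ∧ (1 ≤ d₂ - 1 → β' (d₂ - 1) ≠ 0) ∧
        M * (Dx + φ b) - (∑ j ∈ Finset.range d₂, φ (γ j) * Dy ^ j) * L
          = φ m' + (∑ i ∈ Finset.range (d₁ + 1), φ (α' (i + 1)) * Dx ^ (i + 1))
              + (∑ j ∈ Finset.range (d₂ - 1), φ (β' (j + 1)) * Dy ^ (j + 1)) := by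
  obtain ⟨n, rfl⟩ : ∃ n, d₂ = n + 1 := ⟨d₂ - 1, by omega⟩
  simp only [Nat.add_sub_cancel] at *
  set k : K := dy b + a * b - c with hkk
  -- division of My by (Dy + φ a)
  set cc : ℕ → K := fun j => if j = 0 then 0 else β j with hcc
  obtain ⟨γ, r, hγtop, hdiv⟩ := divD φ dy Dy hDy a n cc
  set Aop : R := ∑ j ∈ Finset.range (n + 1), φ (γ j) * Dy ^ j with hAop
  have hγne : γ n ≠ 0 := by
    rw [hγtop]; simpa [hcc] using hβ
  have hMyf : My = Aop * (Dy + φ a) + φ r := by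
    rw [hMy, ← hdiv, Finset.sum_range_succ' (fun j => φ (cc j) * Dy ^ j)]
    simp [hcc]
  have hLfac : L = (Dy + φ a) * (Dx + φ b) - φ k := by
    have e1 : (Dy + φ a) * (Dx + φ b)
        = Dx * Dy + φ a * Dx + φ b * Dy + (φ (dy b) + φ (a * b)) := by
      rw [add_mul, mul_add, mul_add, hDy b, ← map_mul φ, hD]
      abel
    rw [hL, e1, hkk, map_sub, map_add]
    noncomm_ring
  have hfac : M * (Dx + φ b) - Aop * L = (Mx + φ m₀ + φ r) * (Dx + φ b) + Aop * φ k := by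
    rw [hM, hMyf, hLfac]
    noncomm_ring
  refine ⟨γ, r, hγne, hfac, ?_⟩
  -- X part
  set δ : ℕ → K := fun i => if i = 0 then m₀ + r else α i with hδ
  have hN : Mx + φ m₀ + φ r = ∑ i ∈ Finset.range (d₁ + 1), φ (δ i) * Dx ^ i := by
    rw [Finset.sum_range_succ' (fun i => φ (δ i) * Dx ^ i), hMx]
    simp [hδ, map_add]
    noncomm_ring
  have hpushx := fun i => pushD φ dx Dx hDx i b
  choose gx hgx hgex using hpushx
  obtain ⟨E, hEtop, hE⟩ := collectD φ Dx d₁ δ gx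
  have hXb : (∑ i ∈ Finset.range (d₁ + 1), φ (δ i) * Dx ^ i) * φ b
      = ∑ m ∈ Finset.range (d₁ + 1), φ (E m) * Dx ^ m := by
    rw [Finset.sum_mul, ← hE]
    exact Finset.sum_congr rfl fun i _ => by rw [mul_assoc, hgex i]
  have hXd : (∑ i ∈ Finset.range (d₁ + 1), φ (δ i) * Dx ^ i) * Dx
      = ∑ i ∈ Finset.range (d₁ + 1), φ (δ i) * Dx ^ (i + 1) := by
    rw [Finset.sum_mul]
    exact Finset.sum_congr rfl fun i _ => by rw [mul_assoc, ← pow_succ]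
  set α' : ℕ → K := fun i => δ (i - 1) + (if i ≤ d₁ then E i else 0) with hα'
  have hα'top : α' (d₁ + 1) ≠ 0 := by
    have : α' (d₁ + 1) = α d₁ := by
      simp only [hα', Nat.add_sub_cancel, if_neg (by omega : ¬ d₁ + 1 ≤ d₁), add_zero, hδ]
      rw [if_neg (by omega)]
    rw [this]; exact hα
  have hXsum : ∑ i ∈ Finset.range (d₁ + 1), φ (α' (i + 1)) * Dx ^ (i + 1)
      = (∑ i ∈ Finset.range (d₁ + 1), φ (δ i) * Dx ^ (i + 1))
        + ∑ m ∈ Finset.range d₁, φ (E (m + 1)) * Dx ^ (m + 1) := by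
    have e2 : ∀ i ∈ Finset.range (d₁ + 1), φ (α' (i + 1)) * Dx ^ (i + 1)
        = φ (δ i) * Dx ^ (i + 1) + φ (if i + 1 ≤ d₁ then E (i + 1) else 0) * Dx ^ (i + 1) := by
      intro i _
      simp only [hα', Nat.add_sub_cancel, map_add, add_mul]
    rw [Finset.sum_congr rfl e2, Finset.sum_add_distrib]
    congr 1
    rw [Finset.sum_range_succ, if_neg (by omega : ¬ d₁ + 1 ≤ d₁)]
    simp only [map_zero, zero_mul, add_zero]
    exact Finset.sum_congr rfl fun m hm => by
      rw [if_pos (by rw [Finset.mem_range] at hm; omega)]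
  have hX : (Mx + φ m₀ + φ r) * (Dx + φ b)
      = φ (E 0) + ∑ i ∈ Finset.range (d₁ + 1), φ (α' (i + 1)) * Dx ^ (i + 1) := by
    rw [hN, mul_add, hXd, hXb, hXsum,
      Finset.sum_range_succ' (fun m => φ (E m) * Dx ^ m)]
    simp only [pow_zero, mul_one]
    noncomm_ring
  -- Y part
  have hpushy := fun j => pushD φ dy Dy hDy j k
  choose gy hgy hgey using hpushy
  obtain ⟨C, hCtop, hC⟩ := collectD φ Dy n γ gy
  have hY : Aop * φ k = φ (C 0) + ∑ j ∈ Finset.range n, φ (C (j + 1)) * Dy ^ (j + 1) := by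
    rw [hAop, Finset.sum_mul]
    have : ∑ j ∈ Finset.range (n + 1), φ (γ j) * Dy ^ j * φ k
        = ∑ m ∈ Finset.range (n + 1), φ (C m) * Dy ^ m := by
      rw [← hC]
      exact Finset.sum_congr rfl fun j _ => by rw [mul_assoc, hgey j]
    rw [this, Finset.sum_range_succ' (fun m => φ (C m) * Dy ^ m)]
    simp only [pow_zero, mul_one]
    noncomm_ring
  refine ⟨α', C, E 0 + C 0, hα'top, fun _ => ?_, ?_⟩
  · rw [hCtop, hgy n]
    exact mul_ne_zero hγne hk
  · rw [hfac, hX, hY, map_add]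
    noncomm_ring
end
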